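/- Fix A ∈ ℝ^{p×k} with AᵀA = I_k and X, λ, λ₁ as above. If B satisfies the subgradient stationarity conditions and B_{(i)} ≠ 0, then 2‖AᵀXᵀX^{(i)} − b_i‖₂ = (2‖X^{(i)}‖₂² + 2λ + λ₁/‖B_{(i)}‖₂)·‖B_{(i)}‖₂ > λ₁, where b_i = Σ_{j≠i}(X^{(j)ᵀ}X^{(i)})B_{(j)}ᵀ. -/

import Mathlib

open Matrix

noncomputable def frob {m n : Type*} [Fintype m] [Fintype n] (A : Matrix m n ℝ) : ℝ :=
  Real.sqrt (∑ i, ∑ j, A i j ^ 2)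

noncomputable def enorm2 {k : Type*} [Fintype k] (v : k → ℝ) : ℝ :=
  Real.sqrt (∑ i, v i ^ 2)

lemma enorm2_pos {k : Type*} [Fintype k] {v : k → ℝ} (hv : v ≠ 0) : 0 < enorm2 v := by
  apply Real.sqrt_pos.mpr
  have : ∃ j, v j ≠ 0 := by
    by_contra h; push_neg at h; exact hv (funext h)
  obtain ⟨j, hj⟩ := this
  have : 0 < v j ^ 2 := by positivity
  exact lt_of_lt_of_le this (Finset.single_le_sum (fun i _ => sq_nonneg (v i)) (Finset.mem_univ j))

lemma enorm2_smul {k : Type*} [Fintype k] (c : ℝ) (v : k → ℝ) :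
    enorm2 (c • v) = |c| * enorm2 v := by
  unfold enorm2
  rw [show (∑ j, (c • v) j ^ 2) = c ^ 2 * ∑ j, v j ^ 2 by
      simp [Finset.mul_sum, mul_pow],
    Real.sqrt_mul (sq_nonneg c), Real.sqrt_sq_eq_abs]

theorem stmt9 {n p k : ℕ} (X : Matrix (Fin n) (Fin p) ℝ) (A : Matrix (Fin p) (Fin k) ℝ)
    (hA : Aᵀ * A = 1) (lam lam1 : ℝ) (hlam : 0 < lam) (hlam1 : 0 < lam1)
    (B : Matrix (Fin p) (Fin k) ℝ) (i : Fin p) (hBi : B i ≠ 0)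
    (hstat :
      (∑ j ∈ Finset.univ.erase i, (∑ r, X r j * X r i) • B j)
        + ((∑ r, X r i ^ 2) + lam) • B i
        - (Aᵀ * Xᵀ).mulVec (fun r => X r i)
        + (lam1 / 2) • (enorm2 (B i))⁻¹ • B i = 0) :
    2 * enorm2 ((Aᵀ * Xᵀ).mulVec (fun r => X r i)
        - ∑ j ∈ Finset.univ.erase i, (∑ r, X r j * X r i) • B j)
      = (2 * (∑ r, X r i ^ 2) + 2 * lam + lam1 / enorm2 (B i)) * enorm2 (B i)
    ∧ lam1 < 2 * enorm2 ((Aᵀ * Xᵀ).mulVec (fun r => X r i)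
        - ∑ j ∈ Finset.univ.erase i, (∑ r, X r j * X r i) • B j) := by
  have hpos : 0 < enorm2 (B i) := enorm2_pos hBi
  set c : ℝ := ((∑ r, X r i ^ 2) + lam) + lam1 / 2 * (enorm2 (B i))⁻¹ with hc
  have hXsq : 0 ≤ ∑ r, X r i ^ 2 := Finset.sum_nonneg fun r _ => sq_nonneg _
  have hcpos : 0 < c := by
    rw [hc]
    have h0 : 0 < lam1 / 2 * (enorm2 (B i))⁻¹ := by positivity
    linarith
  have key : (Aᵀ * Xᵀ).mulVec (fun r => X r i)
      - ∑ j ∈ Finset.univ.erase i, (∑ r, X r j * X r i) • B j = c • B i := by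
    have := hstat
    have h2 : (Aᵀ * Xᵀ).mulVec (fun r => X r i)
        = (∑ j ∈ Finset.univ.erase i, (∑ r, X r j * X r i) • B j)
          + ((∑ r, X r i ^ 2) + lam) • B i + (lam1 / 2) • (enorm2 (B i))⁻¹ • B i := by
      have := sub_eq_zero.mpr hstat
      funext t
      have h3 := congrFun hstat t
      simp only [Pi.add_apply, Pi.sub_apply, Pi.zero_apply] at h3 ⊢
      linarith
    rw [h2]
    funext t
    simp only [Pi.add_apply, Pi.sub_apply, Pi.smul_apply, smul_eq_mul,
      Finset.sum_apply]
    ring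
  rw [key, enorm2_smul, abs_of_pos hcpos]
  constructor
  · rw [hc]; field_simp
  · have h1 : 2 * (c * enorm2 (B i)) =
        (2 * (∑ r, X r i ^ 2) + 2 * lam) * enorm2 (B i) + lam1 := by
      rw [hc]; field_simp
    rw [h1]
    have : 0 < (2 * (∑ r, X r i ^ 2) + 2 * lam) * enorm2 (B i) := by positivity
    linarith
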